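/- Let k and ℓ be integers with 2 ≤ ℓ < k, let n be a positive integer, let q = ⌊(2n + k − ℓ)/(k + ℓ − 1)⌋ and n' = n − q. Then ⌊(2n' + k − ℓ)/(k + ℓ − 3)⌋ equals q + 1 if ⌈n − (k + ℓ − 1)q/2⌉ ≥ ℓ − 1, and equals q otherwise. Moreover n − (k + ℓ − 1)q/2 = n' − (k + ℓ − 3)q/2. -/
import Mathlib

lemma floor_div_intpos (a b : ℤ) (hb : 0 < b) : ⌊(a:ℚ)/(b:ℚ)⌋ = a / b := by
  lift b to ℕ using hb.le
  exact_mod_cast Rat.floor_intCast_div_natCast a b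

lemma ceil_div_intpos (a b : ℤ) (hb : 0 < b) : ⌈(a:ℚ)/(b:ℚ)⌉ = -((-a) / b) := by
  have h : (⌈(a:ℚ)/(b:ℚ)⌉ : ℤ) = -⌊(-(a:ℚ))/(b:ℚ)⌋ := by
    rw [neg_div, Int.floor_neg, neg_neg]
  have h2 := floor_div_intpos (-a) b hb
  push_cast at h2
  rw [h, h2]

theorem number_lemma (k ℓ n : ℤ) (hℓ : 2 ≤ ℓ) (hk : ℓ < k) (hn : 0 < n)
    (q : ℤ) (hq : q = ⌊(2 * (n : ℚ) + k - ℓ) / (k + ℓ - 1)⌋)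
    (n' : ℤ) (hn' : n' = n - q) :
    (⌊(2 * (n' : ℚ) + k - ℓ) / (k + ℓ - 3)⌋ =
      if ℓ - 1 ≤ ⌈(n : ℚ) - (k + ℓ - 1) * q / 2⌉ then q + 1 else q) ∧
    (n : ℚ) - (k + ℓ - 1) * q / 2 = (n' : ℚ) - (k + ℓ - 3) * q / 2 := by
  have hm : (0:ℤ) < k + ℓ - 1 := by omega
  have hm2 : (0:ℤ) < k + ℓ - 3 := by omega
  have h1 : q = (2*n + k - ℓ) / (k + ℓ - 1) := by
    rw [hq, ← floor_div_intpos (2*n + k - ℓ) (k + ℓ - 1) hm]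
    push_cast; ring_nf
  have h2 : ⌊(2 * (n' : ℚ) + k - ℓ) / (k + ℓ - 3)⌋ = (2*n' + k - ℓ) / (k + ℓ - 3) := by
    rw [← floor_div_intpos (2*n' + k - ℓ) (k + ℓ - 3) hm2]
    push_cast; ring_nf
  have h3 : ⌈(n : ℚ) - (k + ℓ - 1) * q / 2⌉ = -((-(2*n - (k+ℓ-1)*q)) / 2) := by
    rw [← ceil_div_intpos (2*n - (k+ℓ-1)*q) 2 (by norm_num)]
    congr 1
    push_cast; ring
  constructor
  · rw [h2, h3]
    have e1 := Int.emod_add_mul_ediv (2*n + k - ℓ) (k + ℓ - 1)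
    have e2 := Int.emod_nonneg (2*n + k - ℓ) (by omega : k + ℓ - 1 ≠ 0)
    have e3 := Int.emod_lt_of_pos (2*n + k - ℓ) hm
    set r := (2*n + k - ℓ) % (k + ℓ - 1) with hr
    have e1' : r + (k+ℓ-1)*q = 2*n + k - ℓ := by rw [h1]; exact e1
    have e4 : 2*n' + k - ℓ = (k+ℓ-3)*q + r := by rw [hn']; linear_combination -e1'
    have e5 : (2*n' + k - ℓ) / (k + ℓ - 3) = if r ≥ k + ℓ - 3 then q + 1 else q := by
      rw [e4]
      split <;> rename_i h
      · have : (k+ℓ-3)*q + r = (r - (k+ℓ-3)) + (k+ℓ-3)*(q+1) := by ring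
        rw [this, Int.add_mul_ediv_left _ _ (by omega : k+ℓ-3 ≠ 0), Int.ediv_eq_zero_of_lt (by omega) (by omega)]
        omega
      · have : (k+ℓ-3)*q + r = r + (k+ℓ-3)*q := by ring
        rw [this, Int.add_mul_ediv_left _ _ (by omega : k+ℓ-3 ≠ 0), Int.ediv_eq_zero_of_lt (by omega) (by omega)]
        omega
    rw [e5]
    have e6 : 2*n - (k+ℓ-1)*q = r - k + ℓ := by linear_combination -e1'
    rw [e6]
    have e7 := Int.emod_add_mul_ediv (-(r - k + ℓ)) 2
    have e8 := Int.emod_nonneg (-(r - k + ℓ)) (by norm_num : (2:ℤ) ≠ 0)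
    have e9 := Int.emod_lt_of_pos (-(r - k + ℓ)) (by norm_num : (0:ℤ) < 2)
    split <;> split <;> try rfl
    all_goals omega
  · rw [hn']; push_cast; ring
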